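/- Let n ≥ 3, -2 < l < 0 with n + l > 0. The function f(r) = (c₁ + c₂r²)^{γ/2}(c₃ + c₄r²)^{ν/2} with c₁,c₂,c₃,c₄ > 0, −2 < γ + ν < 0, and c₁c₄γ + c₂c₃ν > 0 satisfies: f is continuous and positive on (0,∞); f(r) = O(r^{γ+ν}) as r → ∞; and the function h(r) = r·(d/dr)(r^{−(γ+ν)}f(r)) satisfies h(r) > 0 for all sufficiently small r > 0 and h(r) < 0 for all sufficiently large r. -/

import Mathlib

open Real Filter

theorem stmt_12 (n γ ν c₁ c₂ c₃ c₄ : ℝ) (hn : 3 ≤ n)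
    (hc₁ : 0 < c₁) (hc₂ : 0 < c₂) (hc₃ : 0 < c₃) (hc₄ : 0 < c₄)
    (hsum : -2 < γ + ν) (hsum' : γ + ν < 0) (hmix : 0 < c₁ * c₄ * γ + c₂ * c₃ * ν)
    (hnl : 0 < n + (γ + ν))
    (f h : ℝ → ℝ)
    (hf : ∀ r : ℝ, f r = (c₁ + c₂ * r ^ 2) ^ (γ / 2) * (c₃ + c₄ * r ^ 2) ^ (ν / 2))
    (hh : ∀ r : ℝ, h r = r * deriv (fun s => s ^ (-(γ + ν)) * f s) r) :
    ContinuousOn f (Set.Ioi 0) ∧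
    (∀ r : ℝ, 0 < r → 0 < f r) ∧
    (∃ K > 0, ∀ᶠ r in atTop, |f r| ≤ K * r ^ (γ + ν)) ∧
    (∀ᶠ r in nhdsWithin 0 (Set.Ioi 0), 0 < h r) ∧
    (∀ᶠ r in atTop, h r < 0) := by
  have hfeq : f = fun r => (c₁ + c₂ * r ^ 2) ^ (γ / 2) * (c₃ + c₄ * r ^ 2) ^ (ν / 2) :=
    funext hf
  have hApos : ∀ r : ℝ, 0 < c₁ + c₂ * r ^ 2 := fun r => by positivity
  have hBpos : ∀ r : ℝ, 0 < c₃ + c₄ * r ^ 2 := fun r => by positivity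
  -- positivity
  have hfpos : ∀ r : ℝ, 0 < f r := fun r => by
    rw [hf r]; exact mul_pos (rpow_pos_of_pos (hApos r) _) (rpow_pos_of_pos (hBpos r) _)
  -- continuity
  have hcont : ContinuousOn f (Set.Ioi 0) := by
    rw [hfeq]
    apply ContinuousOn.mul
    · apply ContinuousOn.rpow_const (by fun_prop)
      exact fun r _ => Or.inl (hApos r).ne'
    · apply ContinuousOn.rpow_const (by fun_prop)
      exact fun r _ => Or.inl (hBpos r).ne'
  refine ⟨hcont, fun r hr => hfpos r, ?_, ?_, ?_⟩
  · -- big-O bound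
    have key : ∀ (c d p : ℝ), 0 < c → 0 < d →
        ∃ M > 0, ∀ r : ℝ, 1 ≤ r → (c + d * r ^ 2) ^ (p / 2) ≤ M * r ^ p := by
      intro c d p hc hd
      rcases le_or_gt 0 p with hp | hp
      · refine ⟨(c + d) ^ (p / 2), rpow_pos_of_pos (by linarith) _, fun r hr => ?_⟩
        have hr0 : (0:ℝ) < r := lt_of_lt_of_le one_pos hr
        have h1 : c + d * r ^ 2 ≤ (c + d) * r ^ 2 := by nlinarith [sq_nonneg (r - 1), mul_nonneg hc.le (sq_nonneg (r - 1))]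
        calc (c + d * r ^ 2) ^ (p / 2) ≤ ((c + d) * r ^ 2) ^ (p / 2) :=
              rpow_le_rpow (by positivity) h1 (by positivity)
          _ = (c + d) ^ (p / 2) * r ^ p := by
              rw [Real.mul_rpow (by linarith) (by positivity),
                ← Real.rpow_natCast r 2, ← Real.rpow_mul hr0.le, Nat.cast_ofNat,
                show (2:ℝ) * (p / 2) = p by ring]
      · refine ⟨d ^ (p / 2), rpow_pos_of_pos hd _, fun r hr => ?_⟩
        have hr0 : (0:ℝ) < r := lt_of_lt_of_le one_pos hr
        have h1 : d * r ^ 2 ≤ c + d * r ^ 2 := by nlinarith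
        calc (c + d * r ^ 2) ^ (p / 2) ≤ (d * r ^ 2) ^ (p / 2) :=
              rpow_le_rpow_of_nonpos (by positivity) h1 (by linarith)
          _ = d ^ (p / 2) * r ^ p := by
              rw [Real.mul_rpow hd.le (by positivity),
                ← Real.rpow_natCast r 2, ← Real.rpow_mul hr0.le, Nat.cast_ofNat,
                show (2:ℝ) * (p / 2) = p by ring]
    obtain ⟨M₁, hM₁, hb₁⟩ := key c₁ c₂ γ hc₁ hc₂
    obtain ⟨M₂, hM₂, hb₂⟩ := key c₃ c₄ ν hc₃ hc₄
    refine ⟨M₁ * M₂, mul_pos hM₁ hM₂, ?_⟩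
    filter_upwards [eventually_ge_atTop (1:ℝ)] with r hr
    have hr0 : (0:ℝ) < r := lt_of_lt_of_le one_pos hr
    rw [abs_of_pos (hfpos r), hf r]
    calc (c₁ + c₂ * r ^ 2) ^ (γ / 2) * (c₃ + c₄ * r ^ 2) ^ (ν / 2)
        ≤ (M₁ * r ^ γ) * (M₂ * r ^ ν) := by
          apply mul_le_mul (hb₁ r hr) (hb₂ r hr) (rpow_pos_of_pos (hBpos r) _).le
          positivity
      _ = M₁ * M₂ * r ^ (γ + ν) := by rw [Real.rpow_add hr0]; ring
  all_goals {
    have hkey : ∀ r : ℝ, 0 < r → h r =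
        r ^ (-(γ + ν)) * (c₁ + c₂ * r ^ 2) ^ (γ / 2 - 1) * (c₃ + c₄ * r ^ 2) ^ (ν / 2 - 1) *
          (-(c₁ * c₃ * (γ + ν)) - r ^ 2 * (c₁ * c₄ * γ + c₂ * c₃ * ν)) := by
      intro r hr
      have hu : HasDerivAt (fun s : ℝ => s ^ (-(γ + ν)))
          (-(γ + ν) * r ^ (-(γ + ν) - 1)) r :=
        Real.hasDerivAt_rpow_const (Or.inl hr.ne')
      have hA : HasDerivAt (fun s : ℝ => c₁ + c₂ * s ^ 2) (c₂ * (2 * r)) r := by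
        simpa using ((hasDerivAt_pow 2 r).const_mul c₂).const_add c₁
      have hB : HasDerivAt (fun s : ℝ => c₃ + c₄ * s ^ 2) (c₄ * (2 * r)) r := by
        simpa using ((hasDerivAt_pow 2 r).const_mul c₄).const_add c₃
      have hv : HasDerivAt (fun s : ℝ => (c₁ + c₂ * s ^ 2) ^ (γ / 2))
          (c₂ * (2 * r) * (γ / 2) * (c₁ + c₂ * r ^ 2) ^ (γ / 2 - 1)) r :=
        hA.rpow_const (Or.inl (hApos r).ne')
      have hw : HasDerivAt (fun s : ℝ => (c₃ + c₄ * s ^ 2) ^ (ν / 2))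
          (c₄ * (2 * r) * (ν / 2) * (c₃ + c₄ * r ^ 2) ^ (ν / 2 - 1)) r :=
        hB.rpow_const (Or.inl (hBpos r).ne')
      have hD := (hu.mul (hv.mul hw))
      have hfun : (fun s : ℝ => s ^ (-(γ + ν)) * f s) =
          fun s : ℝ => s ^ (-(γ + ν)) *
            ((c₁ + c₂ * s ^ 2) ^ (γ / 2) * (c₃ + c₄ * s ^ 2) ^ (ν / 2)) := by
        funext s; rw [hf s]
      rw [hh r, hfun, show (fun s : ℝ => s ^ (-(γ + ν)) * ((c₁ + c₂ * s ^ 2) ^ (γ / 2) * (c₃ + c₄ * s ^ 2) ^ (ν / 2))) = ((fun s : ℝ => s ^ (-(γ + ν))) * ((fun s : ℝ => (c₁ + c₂ * s ^ 2) ^ (γ / 2)) * fun s : ℝ => (c₃ + c₄ * s ^ 2) ^ (ν / 2))) from rfl, hD.deriv]; simp only [Pi.mul_apply]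
      -- algebraic identity
      have eA : (c₁ + c₂ * r ^ 2) ^ (γ / 2) =
          (c₁ + c₂ * r ^ 2) ^ (γ / 2 - 1) * (c₁ + c₂ * r ^ 2) := by
        rw [← Real.rpow_add_one (hApos r).ne']; ring_nf
      have eB : (c₃ + c₄ * r ^ 2) ^ (ν / 2) =
          (c₃ + c₄ * r ^ 2) ^ (ν / 2 - 1) * (c₃ + c₄ * r ^ 2) := by
        rw [← Real.rpow_add_one (hBpos r).ne']; ring_nf
      have eR : r ^ (-(γ + ν)) = r ^ (-(γ + ν) - 1) * r := by
        rw [← Real.rpow_add_one hr.ne']; ring_nf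
      rw [eA, eB, eR]; ring
    have hpre : ∀ r : ℝ, 0 < r → 0 <
        r ^ (-(γ + ν)) * (c₁ + c₂ * r ^ 2) ^ (γ / 2 - 1) * (c₃ + c₄ * r ^ 2) ^ (ν / 2 - 1) :=
      fun r hr => by positivity
    set P := -(c₁ * c₃ * (γ + ν)) with hP
    set m := c₁ * c₄ * γ + c₂ * c₃ * ν with hm
    have hPpos : 0 < P := by rw [hP]; nlinarith [mul_pos hc₁ hc₃]
    first
    | · -- near zero: positive
        have hε : 0 < min 1 (P / m) := lt_min one_pos (div_pos hPpos hmix)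
        filter_upwards [Ioo_mem_nhdsGT_of_mem (Set.left_mem_Ico.mpr hε)] with r hr
        obtain ⟨hr0, hrε⟩ := hr
        rw [hkey r hr0]
        apply mul_pos (hpre r hr0)
        have h1 : r < 1 := lt_of_lt_of_le hrε (min_le_left _ _)
        have h2 : r < P / m := lt_of_lt_of_le hrε (min_le_right _ _)
        have : r ^ 2 * m < P := by
          have : r ^ 2 < P / m := by nlinarith
          calc r ^ 2 * m < (P / m) * m := by nlinarith
            _ = P := by field_simp
        linarith
    | · -- at top: negative
        filter_upwards [eventually_gt_atTop (max 1 (P / m))] with r hr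
        have h1 : 1 < r := lt_of_le_of_lt (le_max_left _ _) hr
        have h2 : P / m < r := lt_of_le_of_lt (le_max_right _ _) hr
        have hr0 : 0 < r := lt_trans one_pos h1
        rw [hkey r hr0]
        have : P < r ^ 2 * m := by
          have : P / m < r ^ 2 := by nlinarith
          calc P = (P / m) * m := by field_simp
            _ < r ^ 2 * m := by nlinarith
        have hneg : P - r ^ 2 * m < 0 := by linarith
        exact mul_neg_of_pos_of_neg (hpre r hr0) (by linarith)
  }
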